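/- Let s ≥ 1 be an integer, and for each i ∈ {1,…,s} let (A_{i,m})_{m≥0} and (α_{i,m})_{m≥0} be nonnegative real sequences with 0 < α̲ ≤ α_{i,m} ≤ ᾱ < ∞ for all i, m, and let (B_m)_{m≥1} be a nonnegative real sequence. If ∑_{i=1}^s α_{i,m+1} A_{i,m+1}² ≤ B_m · ∑_{i=1}^s A_{i,m} for all m ≥ 1, and ∑_{m=1}^∞ B_m < ∞, then for every i ∈ {1,…,s} the series ∑_{m=1}^∞ A_{i,m} converges. -/

import Mathlib

open Finset

/-- Special case of Lemma 2.2 with `s` blocks, `n_{i,m} = m` and `β = 0`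
(cyclic block prox-linear method). -/
theorem seq_lemma_cyclic_blocks
    (s : ℕ) (hs : 1 ≤ s)
    (A α : Fin s → ℕ → ℝ) (B : ℕ → ℝ) (alow aup : ℝ)
    (hA : ∀ i m, 0 ≤ A i m) (hB : ∀ m, 1 ≤ m → 0 ≤ B m)
    (halow : 0 < alow) (hbounds : ∀ i m, alow ≤ α i m ∧ α i m ≤ aup)
    (hcond : ∀ m, 1 ≤ m → ∑ i, α i (m + 1) * A i (m + 1) ^ 2 ≤ B m * ∑ i, A i m)
    (hBsum : Summable (fun m => B (m + 1))) :
    ∀ i, Summable (fun m => A i (m + 1)) := by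
  set S : ℕ → ℝ := fun m => ∑ i, A i m with hSdef
  have hS0 : ∀ m, 0 ≤ S m := fun m => Finset.sum_nonneg fun i _ => hA i m
  set c : ℝ := (s : ℝ) / alow with hc
  have hcpos : 0 ≤ c := div_nonneg (Nat.cast_nonneg s) halow.le
  -- key recursive inequality
  have key : ∀ m, S (m + 2) ≤ S (m + 1) / 2 + c * B (m + 1) / 2 := by
    intro m
    have hBm : 0 ≤ B (m + 1) := hB (m + 1) (Nat.le_add_left 1 m)
    have h1 : alow * ∑ i, A i (m + 2) ^ 2 ≤ B (m + 1) * S (m + 1) := by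
      have : alow * ∑ i, A i (m + 2) ^ 2 ≤ ∑ i, α i (m + 2) * A i (m + 2) ^ 2 := by
        rw [Finset.mul_sum]
        exact Finset.sum_le_sum fun i _ =>
          mul_le_mul_of_nonneg_right (hbounds i (m + 2)).1 (sq_nonneg _)
      exact this.trans (hcond (m + 1) (Nat.le_add_left 1 m))
    have hcs : S (m + 2) ^ 2 ≤ (s : ℝ) * ∑ i, A i (m + 2) ^ 2 := by
      simpa using sq_sum_le_card_mul_sum_sq (s := (Finset.univ : Finset (Fin s)))
        (f := fun i => A i (m + 2))
    have h2 : S (m + 2) ^ 2 ≤ c * B (m + 1) * S (m + 1) := by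
      rw [hc, div_mul_eq_mul_div, div_mul_eq_mul_div, le_div_iff₀ halow]
      calc S (m + 2) ^ 2 * alow ≤ ((s : ℝ) * ∑ i, A i (m + 2) ^ 2) * alow := by
            have hsum : 0 ≤ ∑ i, A i (m + 2) ^ 2 :=
              Finset.sum_nonneg fun i _ => sq_nonneg _
            exact mul_le_mul_of_nonneg_right hcs halow.le
        _ = (s : ℝ) * (alow * ∑ i, A i (m + 2) ^ 2) := by ring
        _ ≤ (s : ℝ) * (B (m + 1) * S (m + 1)) :=
            mul_le_mul_of_nonneg_left h1 (Nat.cast_nonneg s)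
        _ = (s : ℝ) * B (m + 1) * S (m + 1) := by ring
    have ha : 0 ≤ S (m + 2) := hS0 _
    have ht : 0 ≤ c * B (m + 1) := mul_nonneg hcpos hBm
    have hu : 0 ≤ S (m + 1) := hS0 _
    nlinarith [sq_nonneg (c * B (m + 1) - S (m + 1)), sq_nonneg (S (m + 2))]
  -- summability of f m := S (m+1)
  set f : ℕ → ℝ := fun m => S (m + 1) with hf
  set g : ℕ → ℝ := fun m => c * B (m + 1) with hg
  have hgsum : Summable g := hBsum.mul_left c
  have hgnn : ∀ k, 0 ≤ g k := fun k => mul_nonneg hcpos (hB (k + 1) (Nat.le_add_left 1 k))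
  have hgbound : ∀ n, ∑ k ∈ Finset.range n, g k ≤ ∑' k, g k := fun n =>
    Summable.sum_le_tsum _ (fun k _ => hgnn k) hgsum
  have hbound : ∀ n, ∑ k ∈ Finset.range n, f k ≤ 2 * f 0 + ∑' k, g k := by
    intro n
    induction n with
    | zero =>
      have := tsum_nonneg (L := SummationFilter.unconditional ℕ) hgnn
      have := hS0 1
      simp only [Finset.range_zero, Finset.sum_empty, hf]
      linarith
    | succ n ih =>
      have step : ∑ k ∈ Finset.range (n + 1), f k
          = (∑ k ∈ Finset.range n, f (k + 1)) + f 0 := Finset.sum_range_succ' f n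
      have h3 : ∑ k ∈ Finset.range n, f (k + 1)
          ≤ (∑ k ∈ Finset.range n, f k) / 2 + (∑ k ∈ Finset.range n, g k) / 2 := by
        rw [Finset.sum_div, Finset.sum_div, ← Finset.sum_add_distrib]
        exact Finset.sum_le_sum fun k _ => key k
      have h4 := hgbound n
      rw [step]
      linarith
  have hfsum : Summable f :=
    summable_of_sum_range_le (fun m => hS0 (m + 1)) hbound
  intro i
  refine hfsum.of_nonneg_of_le (fun m => hA i (m + 1)) (fun m => ?_)
  exact Finset.single_le_sum (fun j _ => hA j (m + 1)) (Finset.mem_univ i)
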